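/- Let K be a finite field of characteristic p, V a finite-dimensional K-vector space, and j : V × V → K a nondegenerate alternating K-bilinear form. Suppose φ : V → V and φ̂ : K → K are 𝔽_p-linear bijections with j(φ(u), φ(v)) = φ̂(j(u,v)) for all u, v ∈ V. Then there exists a field automorphism σ ∈ Gal(K/𝔽_p) such that φ is σ-semilinear, i.e. φ(s·u) = σ(s)·φ(u) for all s ∈ K, u ∈ V, and φ̂(t) = σ(t)·φ̂(1) for all t ∈ K, where φ̂(1) ∈ K^×. -/

import Mathlib

/-- Let `K` be a finite field of characteristic `p`, `V ≠ 0` a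
finite-dimensional `K`-vector space, and `j` a nondegenerate alternating `K`-bilinear form on
`V`.  If `(φ, φ̂)` is an `𝔽_p`-linear pseudo-isometry of `j`, then `φ` is semilinear over
some field automorphism `σ` of `K`, and `φ̂(t) = σ(t)·φ̂(1)` for all `t`, with `φ̂(1) ≠ 0`. -/
theorem pseudo_isometry_semilinear
    (p : ℕ) [Fact p.Prime] (K V : Type)
    [Field K] [Fintype K] [CharP K p] [Module (ZMod p) K]
    [AddCommGroup V] [Module K V] [FiniteDimensional K V] [Nontrivial V]
    [Module (ZMod p) V]
    (j : V →ₗ[K] V →ₗ[K] K)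
    (halt : ∀ v : V, j v v = 0)
    (hndl : ∀ u : V, (∀ v : V, j u v = 0) → u = 0)
    (hndr : ∀ v : V, (∀ u : V, j u v = 0) → v = 0)
    (φ : V ≃ₗ[ZMod p] V) (φhat : K ≃ₗ[ZMod p] K)
    (h : ∀ u v : V, j (φ u) (φ v) = φhat (j u v)) :
    ∃ σ : K ≃+* K,
      (∀ (s : K) (u : V), φ (s • u) = σ s • φ u) ∧
      (∀ t : K, φhat t = σ t * φhat 1) ∧
      φhat 1 ≠ 0 := by
  classical
  have h1 : φhat 1 ≠ 0 := by
    intro hc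
    have : (1 : K) = 0 := φhat.injective (by simpa using hc)
    exact one_ne_zero this
  obtain ⟨u₀, hu₀⟩ := exists_ne (0 : V)
  have hne : ∃ v₁ : V, j u₀ v₁ ≠ 0 := by
    by_contra hc
    push_neg at hc
    exact hu₀ (hndl u₀ hc)
  obtain ⟨v₁, hv₁⟩ := hne
  have hsurj : ∀ a : K, ∃ v : V, j u₀ v = a := fun a =>
    ⟨(a / j u₀ v₁) • v₁, by rw [map_smul, smul_eq_mul, div_mul_cancel₀ _ hv₁]⟩
  have hsmul' : ∀ (s : K) (u v : V), j (φ (s • u)) (φ v) = φhat (s * j u v) := by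
    intro s u v
    simp only [h, LinearMap.map_smul₂, LinearMap.smul_apply, smul_eq_mul]
  have hmul : ∀ s r : K, φhat (s * r) * φhat 1 = φhat s * φhat r := by
    intro s r
    obtain ⟨v, hv⟩ := hsurj 1
    set t : K := φhat r / φhat 1 with ht
    set v' : V := φ.symm (t • φ v) with hv'
    have hφv' : φ v' = t • φ v := φ.apply_symm_apply _
    have e1 : φhat (j u₀ v') = t * φhat (j u₀ v) := by
      rw [← h, hφv', map_smul, smul_eq_mul, h]
    have e2 : φhat (s * j u₀ v') = t * φhat (s * j u₀ v) := by
      rw [← hsmul', hφv', map_smul, smul_eq_mul, hsmul']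
    rw [hv] at e1 e2
    have hb : j u₀ v' = r := by
      apply φhat.injective
      rw [e1, ht, div_mul_cancel₀ _ h1]
    rw [hb, mul_one] at e2
    rw [e2, ht, div_mul_eq_mul_div, div_mul_cancel₀ _ h1, mul_comm]
  let σ₀ : K →+* K :=
    { toFun := fun a => φhat a / φhat 1
      map_one' := div_self h1
      map_mul' := fun s r => by
        show φhat (s * r) / φhat 1 = φhat s / φhat 1 * (φhat r / φhat 1)
        field_simp
        linear_combination hmul s r
      map_zero' := by show φhat 0 / φhat 1 = 0; simp
      map_add' := fun a b => by
        show φhat (a + b) / φhat 1 = φhat a / φhat 1 + φhat b / φhat 1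
        rw [map_add, add_div] }
  have hσ₀ : ∀ a : K, σ₀ a = φhat a / φhat 1 := fun a => rfl
  have hinj : Function.Injective σ₀ := by
    intro a b hab
    apply φhat.injective
    have := hab
    rw [hσ₀, hσ₀, div_eq_div_iff h1 h1] at this
    exact mul_right_cancel₀ h1 this
  have hbij : Function.Bijective σ₀ := Finite.injective_iff_bijective.mp hinj
  refine ⟨RingEquiv.ofBijective σ₀ hbij, ?_, ?_, h1⟩
  · intro s u
    have hz : ∀ y : V, j (φ (s • u) - (σ₀ s) • φ u) y = 0 := by
      intro y
      obtain ⟨v, hv⟩ := φ.surjective y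
      rw [← hv]
      simp only [map_sub, LinearMap.sub_apply, hsmul', LinearMap.map_smul₂,
        LinearMap.smul_apply, smul_eq_mul, h, hσ₀]
      field_simp
      linear_combination hmul s (j u v)
    have := hndl _ hz
    have := sub_eq_zero.mp this
    simpa using this
  · intro a
    show φhat a = φhat a / φhat 1 * φhat 1
    rw [div_mul_cancel₀ _ h1]
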